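/- Let M be a homogeneous 3-graph in which the relation 'x = y or c(x,y) = R' is an equivalence relation all of whose classes have the same finite size n, and suppose the induced action of the automorphism group of M on the set of R-classes is 2-transitive. Then for any two distinct R-classes A, B and any b, b′ ∈ B there is an automorphism σ of M with σ(b) = b′, σ(A) = A and σ(B) = B; in particular the setwise stabiliser of A and B acts transitively on B and on A. -/

import Mathlib

/-!
Common definitions for edge-coloured graphs ("n-graphs").
`V` is the vertex set and `C` the set of colours; `c x y` is the colour of the
pair `{x, y}` (only meaningful for `x ≠ y`).
-/

variable {V C : Type*}

/-- The colouring `c` is symmetric. -/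
def CSymm (c : V → V → C) : Prop :=
  ∀ x y : V, c x y = c y x

/-- Every colour is realised on some pair of distinct vertices. -/
def CAll (c : V → V → C) : Prop :=
  ∀ i : C, ∃ x y : V, x ≠ y ∧ c x y = i

/-- `σ` is an automorphism of the edge-coloured graph `(V, c)`. -/
def CAuto (c : V → V → C) (σ : Equiv.Perm V) : Prop :=
  ∀ x y : V, x ≠ y → c (σ x) (σ y) = c x y

/-- Homogeneity: every colour-preserving injection defined on a finite set of
vertices (equivalently, every colour-preserving bijection between two finite
subsets) extends to an automorphism. -/
def CHom (c : V → V → C) : Prop :=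
  ∀ (A : Finset V) (f : V → V), Set.InjOn f (↑A : Set V) →
    (∀ x ∈ A, ∀ y ∈ A, x ≠ y → c (f x) (f y) = c x y) →
    ∃ σ : Equiv.Perm V, CAuto c σ ∧ ∀ x ∈ A, σ x = f x

/-- The automorphism group acts transitively on the vertices. -/
def CTrans (c : V → V → C) : Prop :=
  ∀ x y : V, ∃ σ : Equiv.Perm V, CAuto c σ ∧ σ x = y

/-- Primitivity: the automorphism group acts transitively, and the only
equivalence relations invariant under all automorphisms are equality and the
total relation. -/
def CPrim (c : V → V → C) : Prop :=
  CTrans c ∧ ∀ E : V → V → Prop, Equivalence E →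
    (∀ σ : Equiv.Perm V, CAuto c σ → ∀ x y, E x y → E (σ x) (σ y)) →
    (∀ x y, E x y ↔ x = y) ∨ (∀ x y, E x y)

/-- The `i`-coloured neighbourhood `R_i(a)`. -/
def CNbhd (c : V → V → C) (i : C) (a : V) : Set V :=
  {x | x ≠ a ∧ c a x = i}

/-- `X` is a clique in colour `i`. -/
def CClique (c : V → V → C) (i : C) (X : Set V) : Prop :=
  ∀ x ∈ X, ∀ y ∈ X, x ≠ y → c x y = i

/-- There is an `i`-coloured path with `k` edges from `x` to `y`
(a sequence of pairwise distinct vertices). -/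
def CPath (c : V → V → C) (i : C) (x y : V) (k : ℕ) : Prop :=
  ∃ p : Fin (k + 1) → V, Function.Injective p ∧ p 0 = x ∧ p (Fin.last k) = y ∧
    ∀ j : Fin k, c (p j.castSucc) (p j.succ) = i

/-! Definitions specific to 3-graphs, with colours `R = 0`, `S = 1`, `T = 2`. -/

/-- `x = y` or the pair `{x, y}` has colour `R` (the reflexive closure of `R`). -/
def CErel (c : V → V → Fin 3) (x y : V) : Prop :=
  x = y ∨ c x y = 0

/-- For `c a b = R`, the line `ℓ(a,b)`: the vertex `a` together with the
`R`-class of `b` inside `R(a)`. -/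
def CLine (c : V → V → Fin 3) (a b : V) : Set V :=
  insert a {x | (x ≠ a ∧ c a x = 0) ∧ (x = b ∨ c x b = 0)}

/-- A 3-graph is semilinear if its automorphism group acts transitively,
`R(a)` is infinite for every `a`, and on every `R(a)` the reflexive closure of
`R` is an equivalence relation with finitely many classes. -/
def CSemilinear (c : V → V → Fin 3) : Prop :=
  CTrans c ∧ (∀ a : V, (CNbhd c 0 a).Infinite) ∧
    (∀ a : V, ∀ x ∈ CNbhd c 0 a, ∀ y ∈ CNbhd c 0 a, ∀ z ∈ CNbhd c 0 a,
      (x = y ∨ c x y = 0) → (y = z ∨ c y z = 0) → (x = z ∨ c x z = 0)) ∧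
    (∀ a : V, ∃ F : Finset V, (↑F : Set V) ⊆ CNbhd c 0 a ∧
      ∀ x ∈ CNbhd c 0 a, ∃ v ∈ F, x = v ∨ c x v = 0)

/-- Each point is incident with exactly `m` lines: every `R`-neighbourhood has
exactly `m` `R`-classes (witnessed by a transversal of size `m`). -/
def CNumLines (c : V → V → Fin 3) (m : ℕ) : Prop :=
  ∀ a : V, ∃ F : Finset V, F.card = m ∧ (↑F : Set V) ⊆ CNbhd c 0 a ∧
    (∀ x ∈ F, ∀ y ∈ F, x ≠ y → c x y ≠ 0) ∧
    (∀ x ∈ CNbhd c 0 a, ∃ v ∈ F, x = v ∨ c x v = 0)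

/-- `x` and `y` are at `R`-distance exactly 2. -/
def CRDist2 (c : V → V → Fin 3) (x y : V) : Prop :=
  x ≠ y ∧ c x y ≠ 0 ∧ ∃ z, z ≠ x ∧ z ≠ y ∧ c x z = 0 ∧ c z y = 0

/-- `x` and `y` are at `R`-distance exactly 3. -/
def CRDist3 (c : V → V → Fin 3) (x y : V) : Prop :=
  x ≠ y ∧ c x y ≠ 0 ∧ (¬ ∃ z, z ≠ x ∧ z ≠ y ∧ c x z = 0 ∧ c z y = 0) ∧
    ∃ z w, z ≠ x ∧ z ≠ y ∧ w ≠ x ∧ w ≠ y ∧ z ≠ w ∧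
      c x z = 0 ∧ c z w = 0 ∧ c w y = 0

/-- `M` has `R`-diameter 3: for distinct vertices, colour `S` holds exactly at
`R`-distance 2 and colour `T` exactly at `R`-distance 3. -/
def CDiamR3 (c : V → V → Fin 3) : Prop :=
  ∀ x y : V, x ≠ y →
    (c x y = 1 ↔ CRDist2 c x y) ∧ (c x y = 2 ↔ CRDist3 c x y)


section Helpers

variable {V : Type*} {c : V → V → Fin 3}

lemma auto_inv {σ : Equiv.Perm V} (h : CAuto c σ) : CAuto c σ⁻¹ := by
  intro x y hxy
  have hne : σ⁻¹ x ≠ σ⁻¹ y := fun he => hxy (by simpa using congrArg σ he)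
  have := h (σ⁻¹ x) (σ⁻¹ y) hne
  simpa using this.symm

lemma auto_comp {σ τ : Equiv.Perm V} (hσ : CAuto c σ) (hτ : CAuto c τ) :
    CAuto c (σ.trans τ) := by
  intro x y hxy
  have h1 : σ x ≠ σ y := fun h => hxy (σ.injective h)
  simp only [Equiv.trans_apply]
  rw [hτ _ _ h1, hσ _ _ hxy]

lemma erel_map {σ : Equiv.Perm V} (h : CAuto c σ) {x y : V} (hxy : CErel c x y) :
    CErel c (σ x) (σ y) := by
  rcases (hxy : x = y ∨ c x y = 0) with rfl | hc
  · exact Or.inl rfl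
  · by_cases hne : x = y
    · exact Or.inl (by rw [hne])
    · exact Or.inr (by rw [h x y hne, hc])

lemma erel_iff {σ : Equiv.Perm V} (h : CAuto c σ) (x y : V) :
    CErel c (σ x) (σ y) ↔ CErel c x y := by
  constructor
  · intro hs
    have := erel_map (auto_inv h) hs
    simpa using this
  · exact erel_map h

lemma class_image {σ : Equiv.Perm V} (h : CAuto c σ) (a : V) :
    (⇑σ) '' {x | CErel c a x} = {x | CErel c (σ a) x} := by
  ext x
  constructor
  · rintro ⟨y, hy, rfl⟩
    exact erel_map h hy
  · intro hx
    refine ⟨σ⁻¹ x, ?_, by simp⟩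
    have h2 : CErel c (σ a) (σ (σ⁻¹ x)) := by simpa using hx
    exact (erel_iff h _ _).1 h2

lemma move_point (hhom : CHom c) (b₁ b₂ : V) :
    ∃ σ : Equiv.Perm V, CAuto c σ ∧ σ b₁ = b₂ := by
  obtain ⟨σ, hσ, hf⟩ := hhom {b₁} (fun _ => b₂)
    (by
      intro x hx y hy _
      simp only [Finset.coe_singleton, Set.mem_singleton_iff] at hx hy
      rw [hx, hy])
    (by
      intro x hx y hy hxy
      simp only [Finset.mem_singleton] at hx hy
      exact absurd (hx.trans hy.symm) hxy)
  exact ⟨σ, hσ, hf b₁ (Finset.mem_singleton_self b₁)⟩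

lemma stab_move (hsymm : CSymm c) (hhom : CHom c) {b x y : V}
    (hbx : b ≠ x) (hby : b ≠ y) (hcol : c b x = c b y) :
    ∃ σ : Equiv.Perm V, CAuto c σ ∧ σ b = b ∧ σ x = y := by
  classical
  have hinj : Set.InjOn (fun z => if z = b then b else y)
      (↑({b, x} : Finset V) : Set V) := by
    intro u hu v hv huv
    simp only [Finset.coe_insert, Finset.coe_singleton, Set.mem_insert_iff,
      Set.mem_singleton_iff] at hu hv
    rcases hu with rfl | rfl <;> rcases hv with rfl | rfl <;>
      simp_all [Ne.symm hbx]
  have hcolp : ∀ u ∈ ({b, x} : Finset V), ∀ v ∈ ({b, x} : Finset V), u ≠ v →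
      c ((fun z => if z = b then b else y) u) ((fun z => if z = b then b else y) v)
        = c u v := by
    intro u hu v hv huv
    simp only [Finset.mem_insert, Finset.mem_singleton] at hu hv
    by_cases hub : u = b
    · have hvx : v = x := hv.resolve_left (fun h => huv (hub.trans h.symm))
      subst hub; subst hvx
      simp only [if_pos rfl, if_neg (Ne.symm hbx), if_true, eq_self_iff_true]
      exact hcol.symm
    · have hux : u = x := hu.resolve_left hub
      have hvb : v = b := hv.resolve_right (fun h => huv (hux.trans h.symm))
      rw [hux, hvb]
      simp only [if_pos rfl, if_neg (Ne.symm hbx), if_true, eq_self_iff_true]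
      rw [hsymm y b, hsymm x b]
      exact hcol.symm
  obtain ⟨σ, hσ, hf⟩ := hhom {b, x} _ hinj hcolp
  refine ⟨σ, hσ, ?_, ?_⟩
  · have h1 := hf b (by simp)
    simpa using h1
  · have h2 := hf x (by simp)
    simpa [Ne.symm hbx] using h2

lemma stab_class (hsymm : CSymm c) (hall : CAll c) (hhom : CHom c)
    (hE : Equivalence (CErel c))
    (h2trans : ∀ A B A' B' : V, ¬ CErel c A B → ¬ CErel c A' B' →
      ∃ σ : Equiv.Perm V, CAuto c σ ∧ CErel c A' (σ A) ∧ CErel c B' (σ B))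
    {b x y : V} (hbx : ¬ CErel c b x) (hby : ¬ CErel c b y) :
    ∃ σ : Equiv.Perm V, CAuto c σ ∧ σ b = b ∧ CErel c y (σ x) := by
  classical
  by_cases hgood : ∃ x' y', CErel c x x' ∧ CErel c y y' ∧ c b x' = c b y'
  · obtain ⟨x', y', hxx', hyy', hc⟩ := hgood
    have hbx' : b ≠ x' := by
      rintro rfl
      exact hbx (hE.symm hxx')
    have hby' : b ≠ y' := by
      rintro rfl
      exact hby (hE.symm hyy')
    obtain ⟨σ, hσ, hσb, hσx'⟩ := stab_move hsymm hhom hbx' hby' hc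
    refine ⟨σ, hσ, hσb, ?_⟩
    have h1 : CErel c (σ x) (σ x') := erel_map hσ hxx'
    rw [hσx'] at h1
    exact hE.trans hyy' (hE.symm h1)
  · exfalso
    push_neg at hgood
    have hne0 : ∀ u v : V, ¬ CErel c u v → c u v ≠ 0 := fun u v h h0 => h (Or.inr h0)
    have hfin : ∀ i : Fin 3, i ≠ 0 → i = 1 ∨ i = 2 := by decide
    -- every class distinct from that of b is monochromatic towards b
    have monob : ∀ z z' : V, ¬ CErel c b z → CErel c z z' → c b z = c b z' := by
      intro z z' hbz hzz'
      by_contra hnec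
      have hbz' : ¬ CErel c b z' := fun h => hbz (hE.trans h (hE.symm hzz'))
      have hx12 := hfin _ (hne0 b x hbx)
      have hy12 := hfin _ (hne0 b y hby)
      have hz12 := hfin _ (hne0 b z hbz)
      have hz'12 := hfin _ (hne0 b z' hbz')
      obtain ⟨zx, hzx_cl, hzx⟩ : ∃ w, CErel c z w ∧ c b w = c b x := by
        rcases hx12 with h | h
        · rcases hz12 with h2 | h2
          · exact ⟨z, hE.refl z, by rw [h2, h]⟩
          · rcases hz'12 with h3 | h3
            · exact ⟨z', hzz', by rw [h3, h]⟩
            · exact absurd (h2.trans h3.symm) hnec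
        · rcases hz12 with h2 | h2
          · rcases hz'12 with h3 | h3
            · exact absurd (h2.trans h3.symm) hnec
            · exact ⟨z', hzz', by rw [h3, h]⟩
          · exact ⟨z, hE.refl z, by rw [h2, h]⟩
      obtain ⟨zy, hzy_cl, hzy⟩ : ∃ w, CErel c z w ∧ c b w = c b y := by
        rcases hy12 with h | h
        · rcases hz12 with h2 | h2
          · exact ⟨z, hE.refl z, by rw [h2, h]⟩
          · rcases hz'12 with h3 | h3
            · exact ⟨z', hzz', by rw [h3, h]⟩
            · exact absurd (h2.trans h3.symm) hnec
        · rcases hz12 with h2 | h2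
          · rcases hz'12 with h3 | h3
            · exact absurd (h2.trans h3.symm) hnec
            · exact ⟨z', hzz', by rw [h3, h]⟩
          · exact ⟨z, hE.refl z, by rw [h2, h]⟩
      have hbzx : b ≠ zx := by
        rintro rfl
        exact hbz (hE.symm hzx_cl)
      have hbzy : b ≠ zy := by
        rintro rfl
        exact hbz (hE.symm hzy_cl)
      have hbyne : b ≠ y := by
        rintro rfl
        exact hby (hE.refl b)
      obtain ⟨σ, hσ, hσb, hσzy⟩ := stab_move hsymm hhom hbzy hbyne hzy
      have h1 : CErel c y (σ zx) := by
        have h2 : CErel c (σ zy) (σ zx) :=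
          erel_map hσ (hE.trans (hE.symm hzy_cl) hzx_cl)
        rw [hσzy] at h2
        exact h2
      have h2 : c b (σ zx) = c b x := by
        have h3 := hσ b zx hbzx
        rw [hσb] at h3
        rw [h3, hzx]
      exact hgood x (σ zx) (hE.refl x) h1 h2.symm
    -- every class is monochromatic towards every vertex
    have mono : ∀ v z z' : V, ¬ CErel c v z → CErel c z z' → c v z = c v z' := by
      intro v z z' hvz hzz'
      obtain ⟨σ, hσ, hσb⟩ := move_point hhom b v
      have hbz : b ≠ σ⁻¹ z := by
        intro h
        apply hvz
        rw [← hσb, h]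
        simp only [Equiv.Perm.inv_def, Equiv.apply_symm_apply]
        exact hE.refl z
      have hbz' : b ≠ σ⁻¹ z' := by
        intro h
        apply hvz
        have hv' : CErel c v z' := by
          rw [← hσb, h]
          simp only [Equiv.Perm.inv_def, Equiv.apply_symm_apply]
          exact hE.refl z'
        exact hE.trans hv' (hE.symm hzz')
      have e1 : c v z = c b (σ⁻¹ z) := by
        have h := hσ b (σ⁻¹ z) hbz
        rw [hσb] at h
        simp only [Equiv.Perm.inv_def, Equiv.apply_symm_apply] at h
        exact h
      have e2 : c v z' = c b (σ⁻¹ z') := by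
        have h := hσ b (σ⁻¹ z') hbz'
        rw [hσb] at h
        simp only [Equiv.Perm.inv_def, Equiv.apply_symm_apply] at h
        exact h
      have hb1 : ¬ CErel c b (σ⁻¹ z) := by
        intro h
        apply hvz
        have h2 := erel_map hσ h
        rw [hσb] at h2
        simpa using h2
      have hcl : CErel c (σ⁻¹ z) (σ⁻¹ z') := erel_map (auto_inv hσ) hzz'
      rw [e1, e2]
      exact monob _ _ hb1 hcl
    -- the colour between two vertices in distinct classes depends only on the classes
    have cconst : ∀ u v u' v' : V, ¬ CErel c u v → CErel c u u' → CErel c v v' →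
        c u v = c u' v' := by
      intro u v u' v' huv huu' hvv'
      have h1 : c u v = c u v' := mono u v v' huv hvv'
      have hne2 : ¬ CErel c v' u := fun h => huv (hE.symm (hE.trans hvv' h))
      have h2 : c v' u = c v' u' := mono v' u u' hne2 huu'
      rw [h1, hsymm u v', h2, hsymm v' u']
    -- by 2-transitivity the cross-class colour is a global constant
    have gconst : ∀ u v u' v' : V, ¬ CErel c u v → ¬ CErel c u' v' →
        c u v = c u' v' := by
      intro u v u' v' huv hu'v'
      obtain ⟨σ, hσ, hA, hB⟩ := h2trans u v u' v' huv hu'v'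
      have huvne : u ≠ v := by
        rintro rfl
        exact huv (hE.refl u)
      have h0 : c u v = c (σ u) (σ v) := (hσ u v huvne).symm
      have hσuv : ¬ CErel c (σ u) (σ v) := fun h => huv ((erel_iff hσ u v).1 h)
      rw [h0]
      exact cconst (σ u) (σ v) u' v' hσuv (hE.symm hA) (hE.symm hB)
    -- contradiction with CAll
    rcases hfin _ (hne0 b x hbx) with h1 | h1
    · obtain ⟨u, v, huv, hcuv⟩ := hall 2
      rcases Classical.em (CErel c u v) with h | h
      · rcases (h : u = v ∨ c u v = 0) with rfl | h0
        · exact huv rfl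
        · rw [h0] at hcuv
          exact absurd hcuv (by decide)
      · have hg := gconst u v b x h hbx
        rw [hcuv, h1] at hg
        exact absurd hg (by decide)
    · obtain ⟨u, v, huv, hcuv⟩ := hall 1
      rcases Classical.em (CErel c u v) with h | h
      · rcases (h : u = v ∨ c u v = 0) with rfl | h0
        · exact huv rfl
        · rw [h0] at hcuv
          exact absurd hcuv (by decide)
      · have hg := gconst u v b x h hbx
        rw [hcuv, h1] at hg
        exact absurd hg (by decide)

end Helpers

/-- in a homogeneous 3-graph with `R`-classes all of finite size
`n` and a 2-transitive induced action on the classes, the setwise stabiliser of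
two distinct classes `A`, `B` acts transitively on `B` (and hence on `A`). -/
theorem stmt9 {V : Type*} (c : V → V → Fin 3)
    (hsymm : CSymm c) (hall : CAll c) (hhom : CHom c)
    (hE : Equivalence (CErel c))
    (n : ℕ)
    (hsize : ∀ v : V, {x | CErel c v x}.Finite ∧ {x | CErel c v x}.ncard = n)
    (h2trans : ∀ A B A' B' : V, ¬ CErel c A B → ¬ CErel c A' B' →
      ∃ σ : Equiv.Perm V, CAuto c σ ∧ CErel c A' (σ A) ∧ CErel c B' (σ B)) :
    ∀ a b : V, ¬ CErel c a b → ∀ b₁ b₂ : V, CErel c b b₁ → CErel c b b₂ →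
      ∃ σ : Equiv.Perm V, CAuto c σ ∧ σ b₁ = b₂ ∧
        (⇑σ) '' {x | CErel c a x} = {x | CErel c a x} ∧
        (⇑σ) '' {x | CErel c b x} = {x | CErel c b x} := by
  intro a b hab b₁ b₂ hb₁ hb₂
  obtain ⟨τ, hτ, hτb₁⟩ := move_point hhom b₁ b₂
  have hab₁ : ¬ CErel c a b₁ := fun h => hab (hE.trans h (hE.symm hb₁))
  have hab₂ : ¬ CErel c a b₂ := fun h => hab (hE.trans h (hE.symm hb₂))
  have hb₂τa : ¬ CErel c b₂ (τ a) := by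
    intro h
    apply hab₁
    have h2 : CErel c (τ a) (τ b₁) := by
      rw [hτb₁]
      exact hE.symm h
    exact (erel_iff hτ a b₁).1 h2
  have hb₂a : ¬ CErel c b₂ a := fun h => hab₂ (hE.symm h)
  obtain ⟨ρ, hρ, hρb₂, hρclass⟩ := stab_class hsymm hall hhom hE h2trans hb₂τa hb₂a
  have hauto : CAuto c (τ.trans ρ) := auto_comp hτ hρ
  have hσb₁ : (τ.trans ρ) b₁ = b₂ := by
    show ρ (τ b₁) = b₂
    rw [hτb₁, hρb₂]
  refine ⟨τ.trans ρ, hauto, hσb₁, ?_, ?_⟩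
  · have hca : CErel c a ((τ.trans ρ) a) := hρclass
    rw [class_image hauto a]
    ext w
    simp only [Set.mem_setOf_eq]
    exact ⟨fun hw => hE.trans hca hw, fun hw => hE.trans (hE.symm hca) hw⟩
  · have h1 : CErel c ((τ.trans ρ) b) ((τ.trans ρ) b₁) := erel_map hauto hb₁
    rw [hσb₁] at h1
    have hcb : CErel c b ((τ.trans ρ) b) := hE.trans hb₂ (hE.symm h1)
    rw [class_image hauto b]
    ext w
    simp only [Set.mem_setOf_eq]
    exact ⟨fun hw => hE.trans hcb hw, fun hw => hE.trans (hE.symm hcb) hw⟩
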